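/- The set of points (x,y) in the open triangle Δ = {(x,y) ∈ ℝ² : 1 > x > y > 0} for which there exists a sequence i : ℕ → {0,1} with (x,y) ∈ Δ_{(e,e,12)}(i₁,…,iₙ) for every n ≥ 1 and lim_{n→∞} (1/n)·#{k ≤ n : i_k = 1} = 1/2, has two-dimensional Lebesgue measure zero. (This is the key step showing that the Minkowski question mark analog Φ(e,e,12) is singular.) -/

import Mathlib

open Matrix MeasureTheory Filter

noncomputable section

/-- Projection π(a,b,c) = (b/a, c/a). -/
def projPt (v : Fin 3 → ℝ) : ℝ × ℝ := (v 1 / v 0, v 2 / v 0)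

def Vmat : Matrix (Fin 3) (Fin 3) ℝ := !![1,1,1; 0,1,1; 0,0,1]

def prodSeq (C : Fin 2 → Matrix (Fin 3) (Fin 3) ℝ) (i : ℕ → Fin 2) :
    ℕ → Matrix (Fin 3) (Fin 3) ℝ
  | 0 => 1
  | n + 1 => prodSeq C i n * C (i (n + 1))

/-- The subtriangle: convex hull of the π-images of the columns of V·C_{i₁}⋯C_{iₙ}. -/
def subTri (C : Fin 2 → Matrix (Fin 3) (Fin 3) ℝ) (i : ℕ → Fin 2) (n : ℕ) :
    Set (ℝ × ℝ) :=
  convexHull ℝ (Set.range fun j : Fin 3 => projPt fun k => (Vmat * prodSeq C i n) k j)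

/-- The Farey matrices F₀(e,e,12), F₁(e,e,12). -/
def Fee12 : Fin 2 → Matrix (Fin 3) (Fin 3) ℝ :=
  ![!![0,0,1; 1,0,0; 0,1,1], !![0,1,1; 1,0,0; 0,0,1]]

/-! ### Auxiliary: elementary polynomial inequalities -/

theorem auxA (x : ℝ) (hx0 : 0 ≤ x) (hx1 : x ≤ 1) :
    0 ≤ 40 - 166*x + 97*x^2 + 375*x^3 - 165*x^4 - 165*x^5 := by
  nlinarith [sq_nonneg (x - 2/5), sq_nonneg (x - 1/3), mul_nonneg (mul_nonneg hx0 hx0) hx0,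
    mul_nonneg (sub_nonneg.2 hx1) (mul_nonneg (mul_nonneg hx0 hx0) (mul_nonneg hx0 hx0)),
    mul_nonneg (sub_nonneg.2 hx1) (mul_nonneg hx0 hx0),
    mul_nonneg (mul_nonneg (sub_nonneg.2 hx1) (sub_nonneg.2 hx1)) hx0,
    mul_nonneg (mul_nonneg (sub_nonneg.2 hx1) (sub_nonneg.2 hx1)) (mul_nonneg hx0 hx0)]

theorem auxAB (x : ℝ) (hx0 : 0 ≤ x) (hx1 : x ≤ 1) :
    0 ≤ 26 - 208*x + 319*x^2 + 625*x^3 - 165*x^4 - 165*x^5 := by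
  nlinarith [sq_nonneg (x - 1/5), mul_nonneg (mul_nonneg hx0 hx0) hx0,
    mul_nonneg (sub_nonneg.2 hx1) (mul_nonneg (mul_nonneg hx0 hx0) (mul_nonneg hx0 hx0)),
    mul_nonneg hx0 (sq_nonneg (x - 1/5)),
    mul_nonneg (mul_nonneg hx0 hx0) (sq_nonneg (x - 1/5)),
    mul_nonneg (sub_nonneg.2 hx1) (sq_nonneg (x - 1/5)),
    mul_nonneg (mul_nonneg (sub_nonneg.2 hx1) (sub_nonneg.2 hx1)) hx0]

theorem auxABC (x : ℝ) (hx0 : 0 ≤ x) (hx1 : x ≤ 1) :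
    0 ≤ 68 - 214*x + 49*x^2 + 535*x^3 - 165*x^4 - 165*x^5 := by
  nlinarith [sq_nonneg (x - 2/5), mul_nonneg (mul_nonneg hx0 hx0) hx0,
    mul_nonneg (sub_nonneg.2 hx1) (mul_nonneg (mul_nonneg hx0 hx0) (mul_nonneg hx0 hx0)),
    mul_nonneg hx0 (sq_nonneg (x - 2/5)),
    mul_nonneg (mul_nonneg hx0 hx0) (sq_nonneg (x - 2/5)),
    mul_nonneg (sub_nonneg.2 hx1) (sq_nonneg (x - 2/5)),
    mul_nonneg (mul_nonneg (sub_nonneg.2 hx1) (sub_nonneg.2 hx1)) hx0]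

theorem keyIneq2 (x y : ℝ) (hx0 : 0 ≤ x) (hx1 : x ≤ 1) (hy0 : 0 ≤ y) (hy1 : y ≤ 1) :
    0 ≤ (40 - 166*x + 97*x^2 + 375*x^3 - 165*x^4 - 165*x^5)
      + (-14 - 42*x + 222*x^2 + 250*x^3) * y
      + (42 - 6*x - 270*x^2 - 90*x^3) * y^2 := by
  nlinarith [mul_nonneg (auxA x hx0 hx1) (sq_nonneg (1 - y)),
    mul_nonneg (add_nonneg (auxA x hx0 hx1) (auxAB x hx0 hx1))
      (mul_nonneg hy0 (sub_nonneg.2 hy1)),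
    mul_nonneg (auxABC x hx0 hx1) (sq_nonneg y)]

theorem key3 (a b c : ℝ) (ha : 0 < a) (hb : 0 < b) (hac : a ≤ c) (hbc : b ≤ c) :
    8*a*c^2*(40*(a+c)^2 + 66*b*(a+c) + 50*c*(a+c) - 33*b^2 - 18*c^2)
      + 4*c^3*(40*(a+c)^2 + 66*b*(a+c) + 50*a*(a+c) - 33*b^2 - 18*a^2)
    ≤ 5*(a+c)^3*(40*c^2 + 66*a*c + 50*b*c - 33*a^2 - 18*b^2) := by
  have hc : 0 < c := lt_of_lt_of_le ha hac
  have hx0 : 0 ≤ a / c := le_of_lt (div_pos ha hc)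
  have hx1 : a / c ≤ 1 := (div_le_one hc).2 hac
  have hy0 : 0 ≤ b / c := le_of_lt (div_pos hb hc)
  have hy1 : b / c ≤ 1 := (div_le_one hc).2 hbc
  have hq := keyIneq2 (a/c) (b/c) hx0 hx1 hy0 hy1
  have hc5 : (0:ℝ) < c^5 := by positivity
  have hD : 5*(a+c)^3*(40*c^2 + 66*a*c + 50*b*c - 33*a^2 - 18*b^2)
      - (8*a*c^2*(40*(a+c)^2 + 66*b*(a+c) + 50*c*(a+c) - 33*b^2 - 18*c^2)
        + 4*c^3*(40*(a+c)^2 + 66*b*(a+c) + 50*a*(a+c) - 33*b^2 - 18*a^2))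
      = c^5 * ((40 - 166*(a/c) + 97*(a/c)^2 + 375*(a/c)^3 - 165*(a/c)^4 - 165*(a/c)^5)
      + (-14 - 42*(a/c) + 222*(a/c)^2 + 250*(a/c)^3) * (b/c)
      + (42 - 6*(a/c) - 270*(a/c)^2 - 90*(a/c)^3) * (b/c)^2) := by
    field_simp
    ring
  nlinarith [mul_nonneg (le_of_lt hc5) hq]

/-! ### Auxiliary: volume of a triangle -/

open Pointwise in
theorem tri_vol_le (p₀ p₁ p₂ : ℝ × ℝ) :
    volume (convexHull ℝ {p₀, p₁, p₂}) ≤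
      ENNReal.ofReal |(p₁.1 - p₀.1) * (p₂.2 - p₀.2) - (p₂.1 - p₀.1) * (p₁.2 - p₀.2)| := by
  set M : Matrix (Fin 2) (Fin 2) ℝ := !![p₁.1 - p₀.1, p₂.1 - p₀.1; p₁.2 - p₀.2, p₂.2 - p₀.2]
    with hM
  set L : (ℝ × ℝ) →ₗ[ℝ] (ℝ × ℝ) := Matrix.toLin (Module.Basis.finTwoProd ℝ) (Module.Basis.finTwoProd ℝ) M
    with hL
  set Q : Set (ℝ × ℝ) := Set.Icc (0, 0) (1, 1) with hQ
  have hQconv : Convex ℝ Q := convex_Icc _ _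
  have hL01 : ∀ s t : ℝ, L (s, t) =
      ((p₁.1 - p₀.1) * s + (p₂.1 - p₀.1) * t, (p₁.2 - p₀.2) * s + (p₂.2 - p₀.2) * t) := by
    intro s t
    rw [hL, hM, Matrix.toLin_finTwoProd_apply]
  have hsub : convexHull ℝ {p₀, p₁, p₂} ⊆ p₀ +ᵥ (L '' Q) := by
    apply convexHull_min
    · intro p hp
      simp only [Set.mem_insert_iff, Set.mem_singleton_iff] at hp
      have hmem : ∀ s t : ℝ, 0 ≤ s → s ≤ 1 → 0 ≤ t → t ≤ 1 → ((s, t) : ℝ × ℝ) ∈ Q := by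
        intro s t h1 h2 h3 h4
        rw [hQ]
        constructor <;> simp [Prod.le_def, h1, h2, h3, h4]
      rcases hp with h | h | h
      · exact ⟨L (0, 0), ⟨(0, 0), hmem 0 0 le_rfl zero_le_one le_rfl zero_le_one, rfl⟩, by
          rw [hL01]; subst h; simp [Prod.ext_iff]⟩
      · exact ⟨L (1, 0), ⟨(1, 0), hmem 1 0 zero_le_one le_rfl le_rfl zero_le_one, rfl⟩, by
          rw [hL01]; subst h; simp [Prod.ext_iff]⟩
      · exact ⟨L (0, 1), ⟨(0, 1), hmem 0 1 le_rfl zero_le_one zero_le_one le_rfl, rfl⟩, by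
          rw [hL01]; subst h; simp [Prod.ext_iff]⟩
    · exact (hQconv.linear_image L).vadd p₀
  have hQvol : volume Q = 1 := by
    rw [hQ, ← Set.Icc_prod_Icc, Measure.volume_eq_prod, Measure.prod_prod, Real.volume_Icc]
    norm_num
  calc volume (convexHull ℝ {p₀, p₁, p₂}) ≤ volume (p₀ +ᵥ (L '' Q)) := measure_mono hsub
    _ = volume (L '' Q) := measure_vadd _ _ _
    _ = ENNReal.ofReal |LinearMap.det L| * volume Q := Measure.addHaar_image_linearMap _ _ _
    _ = ENNReal.ofReal |LinearMap.det L| := by rw [hQvol, mul_one]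
    _ = _ := by rw [hL, LinearMap.det_toLin, hM, Matrix.det_fin_two_of]

/-! ### The word layer -/

def ext' {n : ℕ} (w : Fin n → Fin 2) : ℕ → Fin 2 :=
  fun k => if h : k - 1 < n then w ⟨k - 1, h⟩ else 0

theorem prodSeq_congr (C : Fin 2 → Matrix (Fin 3) (Fin 3) ℝ) (i i' : ℕ → Fin 2) (n : ℕ)
    (h : ∀ k, 1 ≤ k → k ≤ n → i k = i' k) :
    prodSeq C i n = prodSeq C i' n := by
  induction n with
  | zero => rfl
  | succ m ih =>
      have h1 : prodSeq C i m = prodSeq C i' m :=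
        ih fun k hk1 hk2 => h k hk1 (le_trans hk2 (Nat.le_succ m))
      have h2 : i (m + 1) = i' (m + 1) := h (m + 1) (Nat.succ_le_succ (Nat.zero_le m)) le_rfl
      show prodSeq C i m * C (i (m + 1)) = prodSeq C i' m * C (i' (m + 1))
      rw [h1, h2]

def Mw {n : ℕ} (w : Fin n → Fin 2) : Matrix (Fin 3) (Fin 3) ℝ :=
  Vmat * prodSeq Fee12 (ext' w) n

theorem Mw_zero (w : Fin 0 → Fin 2) : Mw w = Vmat := by
  show Vmat * prodSeq Fee12 (ext' w) 0 = Vmat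
  show Vmat * 1 = Vmat
  rw [mul_one]

theorem ext'_snoc_last {n : ℕ} (w : Fin n → Fin 2) (d : Fin 2) :
    ext' (Fin.snoc w d) (n + 1) = d := by
  unfold ext'
  simp only [Nat.add_sub_cancel]
  rw [dif_pos (Nat.lt_succ_self n)]
  have : (⟨n, Nat.lt_succ_self n⟩ : Fin (n+1)) = Fin.last n := rfl
  rw [this, Fin.snoc_last]

theorem Mw_snoc {n : ℕ} (w : Fin n → Fin 2) (d : Fin 2) :
    Mw (Fin.snoc w d) = Mw w * Fee12 d := by
  show Vmat * prodSeq Fee12 (ext' (Fin.snoc w d)) (n+1) = Vmat * prodSeq Fee12 (ext' w) n * Fee12 d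
  have h1 : prodSeq Fee12 (ext' (Fin.snoc w d)) n = prodSeq Fee12 (ext' w) n := by
    apply prodSeq_congr
    intro k hk1 hk2
    unfold ext'
    have hkn : k - 1 < n := by omega
    have hkn1 : k - 1 < n + 1 := by omega
    rw [dif_pos hkn1, dif_pos hkn]
    have : (⟨k - 1, hkn1⟩ : Fin (n+1)) = Fin.castSucc ⟨k - 1, hkn⟩ := rfl
    rw [this, Fin.snoc_castSucc]
  show Vmat * (prodSeq Fee12 (ext' (Fin.snoc w d)) n * Fee12 (ext' (Fin.snoc w d) (n+1))) = _
  rw [h1, ext'_snoc_last, mul_assoc]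

/-! ### States -/

def sa {n : ℕ} (w : Fin n → Fin 2) : ℝ := Mw w 0 0
def sb {n : ℕ} (w : Fin n → Fin 2) : ℝ := Mw w 0 1
def sc {n : ℕ} (w : Fin n → Fin 2) : ℝ := Mw w 0 2

theorem state_zero (w : Fin 0 → Fin 2) : sa w = 1 ∧ sb w = 1 ∧ sc w = 1 := by
  unfold sa sb sc
  rw [Mw_zero]
  refine ⟨?_, ?_, ?_⟩ <;> simp [Vmat, Matrix.vecHead, Matrix.vecTail]

theorem state_snoc0 {n : ℕ} (w : Fin n → Fin 2) :
    sa (Fin.snoc w 0) = sb w ∧ sb (Fin.snoc w 0) = sc w ∧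
      sc (Fin.snoc w 0) = sa w + sc w := by
  unfold sa sb sc
  rw [Mw_snoc]
  refine ⟨?_, ?_, ?_⟩ <;>
  · simp [Matrix.mul_apply, Fee12, Fin.sum_univ_three, Matrix.vecHead, Matrix.vecTail]
    try ring

theorem state_snoc1 {n : ℕ} (w : Fin n → Fin 2) :
    sa (Fin.snoc w 1) = sb w ∧ sb (Fin.snoc w 1) = sa w ∧
      sc (Fin.snoc w 1) = sa w + sc w := by
  unfold sa sb sc
  rw [Mw_snoc]
  refine ⟨?_, ?_, ?_⟩ <;>
  · simp [Matrix.mul_apply, Fee12, Fin.sum_univ_three, Matrix.vecHead, Matrix.vecTail]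
    try ring

def SInv {n : ℕ} (w : Fin n → Fin 2) : Prop :=
  0 < sa w ∧ 0 < sb w ∧ sa w ≤ sc w ∧ sb w ≤ sc w

theorem sinv_zero (w : Fin 0 → Fin 2) : SInv w := by
  obtain ⟨h1, h2, h3⟩ := state_zero w
  exact ⟨by rw [h1]; norm_num, by rw [h2]; norm_num, by rw [h1, h3], by rw [h2, h3]⟩

theorem sinv_snoc {n : ℕ} (w : Fin n → Fin 2) (d : Fin 2) (h : SInv w) : SInv (Fin.snoc w d) := by
  obtain ⟨ha, hb, hac, hbc⟩ := h
  rcases (by decide : ∀ d : Fin 2, d = 0 ∨ d = 1) d with rfl | rfl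
  · obtain ⟨h1, h2, h3⟩ := state_snoc0 w
    exact ⟨by rw [h1]; exact hb, by rw [h2]; linarith, by rw [h1, h3]; linarith,
      by rw [h2, h3]; linarith⟩
  · obtain ⟨h1, h2, h3⟩ := state_snoc1 w
    exact ⟨by rw [h1]; exact hb, by rw [h2]; exact ha, by rw [h1, h3]; linarith,
      by rw [h2, h3]; linarith⟩

theorem sinv_all {n : ℕ} (w : Fin n → Fin 2) : SInv w := by
  induction n with
  | zero => exact sinv_zero w
  | succ m ih =>
      have hw : w = Fin.snoc (Fin.init w) (w (Fin.last m)) := (Fin.snoc_init_self w).symm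
      rw [hw]
      exact sinv_snoc _ _ (ih _)

/-! ### Zero counts and weights -/

def zer {n : ℕ} (w : Fin n → Fin 2) : ℕ := (Finset.univ.filter fun j => w j = 0).card

theorem zer_snoc {n : ℕ} (w : Fin n → Fin 2) (d : Fin 2) :
    zer (Fin.snoc w d) = zer w + (if d = 0 then 1 else 0) := by
  unfold zer
  rw [Finset.card_filter, Finset.card_filter, Fin.sum_univ_castSucc]
  simp [Fin.snoc_castSucc, Fin.snoc_last]

def Tw {n : ℕ} (w : Fin n → Fin 2) : ℝ :=
  2 ^ zer w * (40*(sc w)^2 + 66*(sa w)*(sc w) + 50*(sb w)*(sc w) - 33*(sa w)^2 - 18*(sb w)^2)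
    / (40 * (sa w) * (sb w) * (sc w)^3)

theorem step_le {n : ℕ} (w : Fin n → Fin 2) :
    Tw (Fin.snoc w 0) + Tw (Fin.snoc w 1) ≤ (5/4) * Tw w := by
  obtain ⟨ha, hb, hac, hbc⟩ := sinv_all w
  have hc : 0 < sc w := lt_of_lt_of_le ha hac
  obtain ⟨e1, e2, e3⟩ := state_snoc0 w
  obtain ⟨f1, f2, f3⟩ := state_snoc1 w
  have hz0 : zer (Fin.snoc w 0) = zer w + 1 := by rw [zer_snoc]; simp
  have hz1 : zer (Fin.snoc w 1) = zer w := by rw [zer_snoc]; simp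
  unfold Tw
  rw [e1, e2, e3, f1, f2, f3, hz0, hz1, pow_succ]
  set a := sa w with hsa
  set b := sb w with hsb
  set c := sc w with hsc
  set z := zer w with hz
  have key := key3 a b c ha hb hac hbc
  have h2z : (0:ℝ) < 2 ^ z := by positivity
  have hane : a ≠ 0 := ne_of_gt ha
  have hbne : b ≠ 0 := ne_of_gt hb
  have hcne : c ≠ 0 := ne_of_gt hc
  have hacpos : (0:ℝ) < a + c := by positivity
  have hacne : a + c ≠ 0 := ne_of_gt hacpos
  have hsum : (5/4) * (2 ^ z * (40*c^2 + 66*a*c + 50*b*c - 33*a^2 - 18*b^2) / (40*a*b*c^3))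
      - ((2 ^ z * 2) * (40*(a+c)^2 + 66*b*(a+c) + 50*c*(a+c) - 33*b^2 - 18*c^2)
          / (40*b*c*(a+c)^3)
        + 2 ^ z * (40*(a+c)^2 + 66*b*(a+c) + 50*a*(a+c) - 33*b^2 - 18*a^2)
          / (40*b*a*(a+c)^3))
      = (2 ^ z / (160*a*b*c^3*(a+c)^3)) *
        (5*(a+c)^3*(40*c^2 + 66*a*c + 50*b*c - 33*a^2 - 18*b^2)
          - (8*a*c^2*(40*(a+c)^2 + 66*b*(a+c) + 50*c*(a+c) - 33*b^2 - 18*c^2)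
            + 4*c^3*(40*(a+c)^2 + 66*b*(a+c) + 50*a*(a+c) - 33*b^2 - 18*a^2))) := by
    field_simp
    ring
  have hpos : 0 ≤ (2 ^ z / (160*a*b*c^3*(a+c)^3)) *
        (5*(a+c)^3*(40*c^2 + 66*a*c + 50*b*c - 33*a^2 - 18*b^2)
          - (8*a*c^2*(40*(a+c)^2 + 66*b*(a+c) + 50*c*(a+c) - 33*b^2 - 18*c^2)
            + 4*c^3*(40*(a+c)^2 + 66*b*(a+c) + 50*a*(a+c) - 33*b^2 - 18*a^2))) := by
    apply mul_nonneg
    · positivity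
    · linarith
  linarith

def snocEquiv (n : ℕ) : ((Fin n → Fin 2) × Fin 2) ≃ (Fin (n+1) → Fin 2) where
  toFun p := Fin.snoc p.1 p.2
  invFun w := (Fin.init w, w (Fin.last n))
  left_inv p := by simp
  right_inv w := Fin.snoc_init_self w

theorem master (n : ℕ) :
    ∑ w : Fin n → Fin 2, Tw w ≤ (5/4)^n * (21/8) := by
  induction n with
  | zero =>
      have hone : ∀ w : Fin 0 → Fin 2, Tw w = 21/8 := by
        intro w
        obtain ⟨h1, h2, h3⟩ := state_zero w
        have hz : zer w = 0 := by unfold zer; simp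
        unfold Tw
        rw [hz, h1, h2, h3]
        norm_num
      rw [Fintype.sum_unique, hone]
      norm_num
  | succ m ih =>
      have hequiv := Fintype.sum_equiv (snocEquiv m)
        (fun p : (Fin m → Fin 2) × Fin 2 => Tw (Fin.snoc p.1 p.2)) Tw (fun p => rfl)
      calc ∑ w : Fin (m+1) → Fin 2, Tw w
          = ∑ p : (Fin m → Fin 2) × Fin 2, Tw (Fin.snoc p.1 p.2) := hequiv.symm
        _ = ∑ w : Fin m → Fin 2, ∑ d : Fin 2, Tw (Fin.snoc w d) := by
            rw [Fintype.sum_prod_type]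
        _ = ∑ w : Fin m → Fin 2, (Tw (Fin.snoc w 0) + Tw (Fin.snoc w 1)) := by
            refine Finset.sum_congr rfl fun w _ => ?_
            rw [Fin.sum_univ_two]
        _ ≤ ∑ w : Fin m → Fin 2, (5/4) * Tw w :=
            Finset.sum_le_sum fun w _ => step_le w
        _ = (5/4) * ∑ w : Fin m → Fin 2, Tw w := by rw [Finset.mul_sum]
        _ ≤ (5/4) * ((5/4)^m * (21/8)) := by
            apply mul_le_mul_of_nonneg_left ih
            norm_num
        _ = (5/4)^(m+1) * (21/8) := by ring

theorem Tw_nonneg {n : ℕ} (w : Fin n → Fin 2) : 0 ≤ Tw w := by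
  obtain ⟨ha, hb, hac, hbc⟩ := sinv_all w
  have hc : 0 < sc w := lt_of_lt_of_le ha hac
  unfold Tw
  apply div_nonneg
  · apply mul_nonneg (by positivity)
    nlinarith
  · positivity

theorem two_pow_zer_div_le {n : ℕ} (w : Fin n → Fin 2) :
    (2:ℝ) ^ zer w / (sa w * sb w * sc w) ≤ Tw w := by
  obtain ⟨ha, hb, hac, hbc⟩ := sinv_all w
  have hc : 0 < sc w := lt_of_lt_of_le ha hac
  unfold Tw
  rw [div_le_div_iff₀ (by positivity) (by positivity)]
  have hpsi : 40*(sc w)^2 ≤ 40*(sc w)^2 + 66*(sa w)*(sc w) + 50*(sb w)*(sc w)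
      - 33*(sa w)^2 - 18*(sb w)^2 := by
    nlinarith [mul_nonneg ha.le (sub_nonneg.2 hac), mul_nonneg hb.le (sub_nonneg.2 hbc),
      mul_pos ha hc, mul_pos hb hc]
  have hmul : (0:ℝ) ≤ 2 ^ zer w * (sa w * sb w * sc w) := by positivity
  nlinarith [mul_le_mul_of_nonneg_left hpsi hmul]

/-! ### Determinant and volume bound -/

theorem det_prodSeq (i : ℕ → Fin 2) (n : ℕ) :
    (prodSeq Fee12 i n).det = 1 ∨ (prodSeq Fee12 i n).det = -1 := by
  induction n with
  | zero => left; exact Matrix.det_one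
  | succ m ih =>
      have hd : (Fee12 (i (m+1))).det = 1 ∨ (Fee12 (i (m+1))).det = -1 := by
        rcases (by decide : ∀ d : Fin 2, d = 0 ∨ d = 1) (i (m+1)) with h | h <;> rw [h]
        · left; norm_num [Fee12, Matrix.det_fin_three, Matrix.vecHead, Matrix.vecTail, Matrix.cons_val_two]
        · right; norm_num [Fee12, Matrix.det_fin_three, Matrix.vecHead, Matrix.vecTail, Matrix.cons_val_two]
      have hstep : (prodSeq Fee12 i (m+1)).det
          = (prodSeq Fee12 i m).det * (Fee12 (i (m+1))).det := by
        show ((prodSeq Fee12 i m) * Fee12 (i (m+1))).det = _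
        rw [Matrix.det_mul]
      rcases ih with h1 | h1 <;> rcases hd with h2 | h2 <;> rw [hstep, h1, h2] <;> norm_num

theorem abs_det_Mw {n : ℕ} (w : Fin n → Fin 2) : |(Mw w).det| = 1 := by
  unfold Mw
  rw [Matrix.det_mul]
  have hV : Vmat.det = 1 := by
    norm_num [Vmat, Matrix.det_fin_three, Matrix.vecHead, Matrix.vecTail, Matrix.cons_val_two]
  rw [hV, one_mul]
  rcases det_prodSeq (ext' w) n with h | h <;> rw [h] <;> norm_num

theorem vol_subTri_le {n : ℕ} (w : Fin n → Fin 2) :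
    volume (subTri Fee12 (ext' w) n) ≤ ENNReal.ofReal (1 / (sa w * sb w * sc w)) := by
  obtain ⟨ha, hb, hac, hbc⟩ := sinv_all w
  have hc : 0 < sc w := lt_of_lt_of_le ha hac
  set f : Fin 3 → ℝ × ℝ := fun j => projPt fun k => (Mw w) k j with hf
  have hsub : subTri Fee12 (ext' w) n = convexHull ℝ {f 0, f 1, f 2} := by
    have hr : (Set.range f) = {f 0, f 1, f 2} := by
      apply Set.Subset.antisymm
      · rintro x ⟨j, rfl⟩
        rcases (by decide : ∀ j : Fin 3, j = 0 ∨ j = 1 ∨ j = 2) j with rfl | rfl | rfl <;> simp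
      · intro x hx
        simp only [Set.mem_insert_iff, Set.mem_singleton_iff] at hx
        rcases hx with rfl | rfl | rfl <;> exact Set.mem_range_self _
    unfold subTri
    rw [← hr]
    rfl
  rw [hsub]
  refine le_trans (tri_vol_le (f 0) (f 1) (f 2)) (ENNReal.ofReal_le_ofReal ?_)
  set M := Mw w with hM
  have h00 : M 0 0 = sa w := rfl
  have h01 : M 0 1 = sb w := rfl
  have h02 : M 0 2 = sc w := rfl
  have hane : M 0 0 ≠ 0 := by rw [h00]; exact ne_of_gt ha
  have hbne : M 0 1 ≠ 0 := by rw [h01]; exact ne_of_gt hb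
  have hcne : M 0 2 ≠ 0 := by rw [h02]; exact ne_of_gt hc
  have hfj : ∀ j, f j = (M 1 j / M 0 j, M 2 j / M 0 j) := fun j => rfl
  have hid : (((f 1).1 - (f 0).1) * ((f 2).2 - (f 0).2)
      - ((f 2).1 - (f 0).1) * ((f 1).2 - (f 0).2)) * (M 0 0 * M 0 1 * M 0 2) = M.det := by
    rw [hfj 0, hfj 1, hfj 2, Matrix.det_fin_three]
    field_simp
    ring
  have habc : (0:ℝ) < sa w * sb w * sc w := by positivity
  have hdet2 : ((f 1).1 - (f 0).1) * ((f 2).2 - (f 0).2)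
      - ((f 2).1 - (f 0).1) * ((f 1).2 - (f 0).2) = M.det / (sa w * sb w * sc w) := by
    rw [eq_div_iff (ne_of_gt habc)]
    rw [← hid, h00, h01, h02]
  rw [hdet2, abs_div, abs_det_Mw, abs_of_pos habc]

/-! ### The covering estimate -/

theorem sum_cover_bound (n : ℕ) :
    ∑ w ∈ Finset.univ.filter (fun w : Fin n → Fin 2 => (9:ℝ)/20 * n ≤ (zer w : ℝ)),
      (1 / (sa w * sb w * sc w))
      ≤ 21/8 * ((5/4) * (2:ℝ) ^ (-(9:ℝ)/20))^n := by
  set K : ℝ := (2:ℝ) ^ (-(9:ℝ)/20 * n) with hK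
  have hKpos : 0 < K := Real.rpow_pos_of_pos (by norm_num) _
  have h1 : ∀ w ∈ Finset.univ.filter (fun w : Fin n → Fin 2 => (9:ℝ)/20 * n ≤ (zer w : ℝ)),
      1 / (sa w * sb w * sc w) ≤ Tw w * K := by
    intro w hw
    have hz := (Finset.mem_filter.1 hw).2
    have h2 := two_pow_zer_div_le w
    have hT := Tw_nonneg w
    obtain ⟨ha, hb, hac, hbc⟩ := sinv_all w
    have hc : 0 < sc w := lt_of_lt_of_le ha hac
    have habc : (0:ℝ) < sa w * sb w * sc w := by positivity
    have h2z : (0:ℝ) < 2 ^ zer w := by positivity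
    have hzpow : ((2:ℝ) ^ zer w)⁻¹ ≤ K := by
      rw [← Real.rpow_natCast 2 (zer w), ← Real.rpow_neg (by norm_num : (0:ℝ) ≤ 2), hK]
      apply (Real.rpow_le_rpow_left_iff (by norm_num : (1:ℝ) < 2)).2
      linarith
    have heq : (1:ℝ) / (sa w * sb w * sc w)
        = ((2:ℝ) ^ zer w / (sa w * sb w * sc w)) * ((2:ℝ) ^ zer w)⁻¹ := by
      field_simp
    rw [heq]
    calc ((2:ℝ) ^ zer w / (sa w * sb w * sc w)) * ((2:ℝ) ^ zer w)⁻¹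
        ≤ Tw w * ((2:ℝ) ^ zer w)⁻¹ := by
          apply mul_le_mul_of_nonneg_right h2
          positivity
      _ ≤ Tw w * K := mul_le_mul_of_nonneg_left hzpow hT
  calc ∑ w ∈ Finset.univ.filter (fun w : Fin n → Fin 2 => (9:ℝ)/20 * n ≤ (zer w : ℝ)),
        (1 / (sa w * sb w * sc w))
      ≤ ∑ w ∈ Finset.univ.filter (fun w : Fin n → Fin 2 => (9:ℝ)/20 * n ≤ (zer w : ℝ)),
        Tw w * K := Finset.sum_le_sum h1
    _ ≤ ∑ w : Fin n → Fin 2, Tw w * K := by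
        apply Finset.sum_le_sum_of_subset_of_nonneg (Finset.filter_subset _ _)
        intro w _ _
        exact mul_nonneg (Tw_nonneg w) hKpos.le
    _ = (∑ w : Fin n → Fin 2, Tw w) * K := by rw [← Finset.sum_mul]
    _ ≤ ((5/4)^n * (21/8)) * K := mul_le_mul_of_nonneg_right (master n) hKpos.le
    _ = 21/8 * ((5/4) * (2:ℝ) ^ (-(9:ℝ)/20))^n := by
        rw [mul_pow, hK]
        rw [← Real.rpow_natCast ((2:ℝ) ^ (-(9:ℝ)/20)) n,
          ← Real.rpow_mul (by norm_num : (0:ℝ) ≤ 2)]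
        ring

theorem ratio_lt_one : (5/4) * (2:ℝ) ^ (-(9:ℝ)/20) < 1 := by
  have h2pos : (0:ℝ) < (2:ℝ) ^ ((9:ℝ)/20) := Real.rpow_pos_of_pos (by norm_num) _
  have hneg : (-(9:ℝ)/20) = -((9:ℝ)/20) := by norm_num
  rw [hneg, Real.rpow_neg (by norm_num : (0:ℝ) ≤ 2), ← div_eq_mul_inv, div_lt_one h2pos]
  have hpow : ((5:ℝ)/4)^(20:ℕ) < ((2:ℝ) ^ ((9:ℝ)/20))^(20:ℕ) := by
    rw [← Real.rpow_natCast ((2:ℝ) ^ ((9:ℝ)/20)) 20,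
      ← Real.rpow_mul (by norm_num : (0:ℝ) ≤ 2)]
    have h9 : (9:ℝ)/20 * (20:ℕ) = ((9:ℕ):ℝ) := by norm_num
    rw [h9, Real.rpow_natCast]
    norm_num
  exact lt_of_pow_lt_pow_left₀ 20 h2pos.le hpow

/-! ### Measure-zero conclusion -/

def SN (N : ℕ) : Set (ℝ × ℝ) :=
  {z : ℝ × ℝ | ∃ i : ℕ → Fin 2,
    (∀ n : ℕ, 1 ≤ n → z ∈ subTri Fee12 i n) ∧
    ∀ n : ℕ, N ≤ n →
      (((Finset.range n).filter fun k => i (k + 1) = 1).card : ℝ) ≤ 11/20 * n}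

theorem SN_subset (N n : ℕ) (hn : 1 ≤ n) (hNn : N ≤ n) :
    SN N ⊆ ⋃ w ∈ Finset.univ.filter (fun w : Fin n → Fin 2 => (9:ℝ)/20 * n ≤ (zer w : ℝ)),
      subTri Fee12 (ext' w) n := by
  rintro z ⟨i, hsub, hcard⟩
  set w : Fin n → Fin 2 := fun j => i (j.1 + 1) with hw
  have hagree : ∀ k, 1 ≤ k → k ≤ n → ext' w k = i k := by
    intro k hk1 hk2
    unfold ext'
    have hkn : k - 1 < n := by omega
    rw [dif_pos hkn]
    show i (k - 1 + 1) = i k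
    congr 1
    omega
  have hTri : subTri Fee12 (ext' w) n = subTri Fee12 i n := by
    unfold subTri
    rw [prodSeq_congr Fee12 (ext' w) i n hagree]
  have hones : (Finset.univ.filter fun j : Fin n => w j = 1).card
      = ((Finset.range n).filter fun k => i (k + 1) = 1).card := by
    rw [Finset.card_filter, Finset.card_filter]
    exact Fin.sum_univ_eq_sum_range (fun k => if i (k + 1) = 1 then 1 else 0) n
  have hsplit : zer w + (Finset.univ.filter fun j : Fin n => w j = 1).card = n := by
    unfold zer
    have hfc : (Finset.univ.filter fun j : Fin n => w j = 1)
        = (Finset.univ.filter fun j : Fin n => ¬ w j = 0) := by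
      apply Finset.filter_congr
      intro j _
      rcases (by decide : ∀ d : Fin 2, d = 0 ∨ d = 1) (w j) with h | h <;> rw [h] <;> simp
    rw [hfc]
    rw [Finset.card_filter_add_card_filter_not]
    simp
  have hzge : (9:ℝ)/20 * n ≤ (zer w : ℝ) := by
    have hc := hcard n hNn
    rw [← hones] at hc
    have : ((zer w : ℝ)) + ((Finset.univ.filter fun j : Fin n => w j = 1).card : ℝ) = n := by
      exact_mod_cast congrArg (fun m : ℕ => (m : ℝ)) hsplit
    linarith
  apply Set.mem_biUnion
  · exact Finset.mem_filter.2 ⟨Finset.mem_univ w, hzge⟩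
  · rw [hTri]
    exact hsub n hn

theorem vol_SN (N : ℕ) : volume (SN N) = 0 := by
  have hbound : ∀ n : ℕ, 1 ≤ n → N ≤ n →
      volume (SN N) ≤ ENNReal.ofReal (21/8 * ((5/4) * (2:ℝ) ^ (-(9:ℝ)/20))^n) := by
    intro n h1 h2
    calc volume (SN N)
        ≤ volume (⋃ w ∈ Finset.univ.filter
            (fun w : Fin n → Fin 2 => (9:ℝ)/20 * n ≤ (zer w : ℝ)),
            subTri Fee12 (ext' w) n) := measure_mono (SN_subset N n h1 h2)
      _ ≤ ∑ w ∈ Finset.univ.filter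
            (fun w : Fin n → Fin 2 => (9:ℝ)/20 * n ≤ (zer w : ℝ)),
            volume (subTri Fee12 (ext' w) n) := measure_biUnion_finset_le _ _
      _ ≤ ∑ w ∈ Finset.univ.filter
            (fun w : Fin n → Fin 2 => (9:ℝ)/20 * n ≤ (zer w : ℝ)),
            ENNReal.ofReal (1 / (sa w * sb w * sc w)) :=
          Finset.sum_le_sum fun w _ => vol_subTri_le w
      _ = ENNReal.ofReal (∑ w ∈ Finset.univ.filter
            (fun w : Fin n → Fin 2 => (9:ℝ)/20 * n ≤ (zer w : ℝ)),
            (1 / (sa w * sb w * sc w))) := by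
          rw [ENNReal.ofReal_sum_of_nonneg]
          intro w _
          obtain ⟨ha, hb, hac, hbc⟩ := sinv_all w
          have hc : 0 < sc w := lt_of_lt_of_le ha hac
          positivity
      _ ≤ ENNReal.ofReal (21/8 * ((5/4) * (2:ℝ) ^ (-(9:ℝ)/20))^n) :=
          ENNReal.ofReal_le_ofReal (sum_cover_bound n)
  have hr0 : (0:ℝ) ≤ (5/4) * (2:ℝ) ^ (-(9:ℝ)/20) := by positivity
  have htendR : Tendsto (fun n : ℕ => 21/8 * ((5/4) * (2:ℝ) ^ (-(9:ℝ)/20))^n) atTop (nhds 0) := by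
    have := (tendsto_pow_atTop_nhds_zero_of_lt_one hr0 ratio_lt_one).const_mul ((21:ℝ)/8)
    simpa using this
  have htend : Tendsto (fun n : ℕ =>
      ENNReal.ofReal (21/8 * ((5/4) * (2:ℝ) ^ (-(9:ℝ)/20))^n)) atTop (nhds 0) := by
    have := ENNReal.tendsto_ofReal htendR
    simpa using this
  have hev : ∀ᶠ n in atTop, volume (SN N)
      ≤ ENNReal.ofReal (21/8 * ((5/4) * (2:ℝ) ^ (-(9:ℝ)/20))^n) := by
    refine eventually_atTop.2 ⟨max 1 N, fun n hn => ?_⟩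
    exact hbound n (le_trans (le_max_left _ _) hn) (le_trans (le_max_right _ _) hn)
  exact le_antisymm (ge_of_tendsto htend hev) (zero_le)

/-- The set of points of the open triangle Δ = {1 > x > y > 0} possessing a normal
Farey (e,e,12) TRIP sequence (frequency of ones tending to 1/2) has Lebesgue measure
zero. -/
theorem stmt15 :
    volume {z : ℝ × ℝ | (z.2 < z.1 ∧ z.1 < 1 ∧ 0 < z.2) ∧
      ∃ i : ℕ → Fin 2,
        (∀ n : ℕ, 1 ≤ n → z ∈ subTri Fee12 i n) ∧
        Tendsto
          (fun n : ℕ =>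
            (((Finset.range n).filter fun k => i (k + 1) = 1).card : ℝ) / n)
          atTop (nhds (1 / 2))} = 0 := by
  set S := {z : ℝ × ℝ | (z.2 < z.1 ∧ z.1 < 1 ∧ 0 < z.2) ∧
      ∃ i : ℕ → Fin 2,
        (∀ n : ℕ, 1 ≤ n → z ∈ subTri Fee12 i n) ∧
        Tendsto
          (fun n : ℕ =>
            (((Finset.range n).filter fun k => i (k + 1) = 1).card : ℝ) / n)
          atTop (nhds (1 / 2))} with hS
  have hsub : S ⊆ ⋃ N : ℕ, SN N := by
    rintro z ⟨_, i, hsubz, htend⟩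
    have hev : ∀ᶠ n in atTop,
        (((Finset.range n).filter fun k => i (k + 1) = 1).card : ℝ) / n < 11/20 :=
      htend.eventually_lt_const (by norm_num)
    obtain ⟨N, hN⟩ := eventually_atTop.1 hev
    refine Set.mem_iUnion.2 ⟨max N 1, i, hsubz, ?_⟩
    intro m hm
    have hm1 : 1 ≤ m := le_trans (le_max_right N 1) hm
    have hmN : N ≤ m := le_trans (le_max_left N 1) hm
    have hlt := hN m hmN
    have hmpos : (0:ℝ) < m := by exact_mod_cast hm1
    rw [div_lt_iff₀ hmpos] at hlt
    linarith
  refine le_antisymm ?_ (zero_le)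
  calc volume S ≤ volume (⋃ N : ℕ, SN N) := measure_mono hsub
    _ ≤ ∑' N : ℕ, volume (SN N) := measure_iUnion_le _
    _ = 0 := by simp [vol_SN]
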